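/- Let P be a semi-isotropic transition matrix on DL(q,r). Then for every n ≥ 0 the n-step transition probability p^{(n)}(x,y) depends only on the quadruple (up(x₁,y₁), up(y₁,x₁), up(x₂,y₂), up(y₂,x₂)), and consequently the Green kernel G(x,y) = ∑_{n≥0} p^{(n)}(x,y) ∈ [0,∞] also depends only on this quadruple. In particular, if x = x₁x₂, v = v₁x₂ ∈ DL(q,r) with hor(x₁) = hor(v₁), and y = y₁y₂ ∈ DL(q,r) satisfies up(x₁,y₁) > up(x₁,v₁), then G(x,y) = G(v,y). -/

import Mathlib

open Filter Topology ENNReal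

/-! ### Generic Markov chain notions -/

/-- `p` is a transition matrix: nonnegative entries, rows summing to `1`. -/
def IsTransMat {X : Type*} (p : X → X → ℝ) : Prop :=
  (∀ x y, 0 ≤ p x y) ∧ ∀ x, HasSum (fun y => p x y) 1

open Classical in
/-- `n`-step transition probabilities. -/
noncomputable def pstep {X : Type*} (p : X → X → ℝ) : ℕ → X → X → ℝ
  | 0, x, y => if x = y then 1 else 0
  | n + 1, x, y => ∑' z, pstep p n x z * p z y

/-- Irreducibility: any state can be reached from any state. -/
def IsIrredMat {X : Type*} (p : X → X → ℝ) : Prop :=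
  ∀ x y, ∃ n : ℕ, 0 < pstep p n x y

/-- Green kernel, valued in `[0,∞]`. -/
noncomputable def Green {X : Type*} (p : X → X → ℝ) (x y : X) : ℝ≥0∞ :=
  ∑' n : ℕ, ENNReal.ofReal (pstep p n x y)

/-- Transience: the Green kernel is everywhere finite. -/
def IsTransient {X : Type*} (p : X → X → ℝ) : Prop :=
  ∀ x y, Green p x y ≠ ⊤

/-- Martin kernel with respect to a root `o`. -/
noncomputable def Martin {X : Type*} (p : X → X → ℝ) (o x y : X) : ℝ :=
  (Green p x y).toReal / (Green p o y).toReal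

/-- Harmonic function: `∑_y p(x,y) h(y)` converges (absolutely) to `h(x)` for all `x`. -/
def IsHarmonic {X : Type*} (p : X → X → ℝ) (h : X → ℝ) : Prop :=
  ∀ x, HasSum (fun y => p x y * h y) (h x)

/-- Minimal positive harmonic function, normalized at the root `o`. -/
def IsMinimalHarmonic {X : Type*} (p : X → X → ℝ) (o : X) (h : X → ℝ) : Prop :=
  IsHarmonic p h ∧ (∀ x, 0 < h x) ∧ h o = 1 ∧
    ∀ h₁ : X → ℝ, IsHarmonic p h₁ → (∀ x, 0 < h₁ x) → (∀ x, h₁ x ≤ h x) →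
      ∃ c : ℝ, ∀ x, h₁ x = c * h x

/-! ### The homogeneous tree `T_q` -/

/-- Finitely supported configurations `ℕ → ℤ/qℤ`. -/
def Conf (q : ℕ) : Type := {σ : ℕ → ZMod q // (Function.support σ).Finite}

/-- Vertex set of the homogeneous tree `T_q`: `Σ_q × ℤ`. -/
def V (q : ℕ) : Type := Conf q × ℤ

/-- Horocycle index of a vertex. -/
def hor {q : ℕ} (x : V q) : ℤ := x.2

/-- The confluent level `k̄` of two vertices. -/
noncomputable def kbar {q : ℕ} (x y : V q) : ℤ :=
  sSup {ℓ : ℤ | ℓ ≤ min x.2 y.2 ∧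
    ∀ m : ℕ, x.1.1 ((x.2 - ℓ).toNat + m) = y.1.1 ((y.2 - ℓ).toNat + m)}

/-- `up(x,y) = hor(x) - k̄(x,y)`. -/
noncomputable def up {q : ℕ} (x y : V q) : ℤ := x.2 - kbar x y

/-- Graph distance on the tree: `d(x,y) = up(x,y) + up(y,x)`. -/
noncomputable def tdist {q : ℕ} (x y : V q) : ℤ := up x y + up y x

/-- The zero configuration. -/
def zeroConf (q : ℕ) : Conf q :=
  ⟨fun _ => 0, Set.Finite.subset (Set.finite_empty) (by simp [Function.support])⟩

/-- Root vertex `o = (0,0)` of the tree. -/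
def troot (q : ℕ) : V q := (zeroConf q, 0)

/-- Semi-isotropic transition matrix on the tree: `p(x,y)` depends only on
`(up(x,y), up(y,x))`. -/
def SemiIsoTree {q : ℕ} (p : V q → V q → ℝ) : Prop :=
  ∀ x y x' y' : V q, up x y = up x' y' → up y x = up y' x' → p x y = p x' y'

/-- The boundary `∂*T_q`: two-sided sequences vanishing at all sufficiently
small indices. -/
def Bdry (q : ℕ) : Type := {ξ : ℤ → ZMod q // ∃ N : ℤ, ∀ n ≤ N, ξ n = 0}

/-- The confluent level `k̄(x,ξ)` of a vertex and a boundary point. -/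
noncomputable def kbarB {q : ℕ} (x : V q) (ξ : Bdry q) : ℤ :=
  sSup {ℓ : ℤ | ℓ ≤ x.2 ∧ ∀ n : ℤ, n ≤ ℓ → x.1.1 ((x.2 - n).toNat) = ξ.1 n}

/-- `up(x,ξ) = hor(x) - k̄(x,ξ)`. -/
noncomputable def upB {q : ℕ} (x : V q) (ξ : Bdry q) : ℤ := x.2 - kbarB x ξ

/-- A sequence of vertices converges to the boundary point `ξ ∈ ∂*T_q`. -/
def TendsToBdry {q : ℕ} (y : ℕ → V q) (ξ : Bdry q) : Prop :=
  Tendsto (fun n => kbarB (y n) ξ) atTop atTop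

/-- A sequence of vertices converges to the distinguished end `ω`. -/
def TendsToOmega {q : ℕ} (y : ℕ → V q) : Prop :=
  Tendsto (fun n => up (troot q) (y n)) atTop atTop

open Classical in
/-- The projected measure `μ̃` on `ℤ`: `μ̃(n) = ∑_{y : hor(y) = n} p(o,y)`. -/
noncomputable def muTilde {q : ℕ} (p : V q → V q → ℝ) (n : ℤ) : ℝ :=
  ∑' y : V q, if hor y = n then p (troot q) y else 0

/-! ### The Diestel–Leader graph `DL(q,r)` -/

/-- Vertex set of the Diestel–Leader graph `DL(q,r)`. -/
def DL (q r : ℕ) : Type := {z : V q × V r // hor z.1 + hor z.2 = 0}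

/-- Root vertex `o = o₁o₂` of `DL(q,r)`. -/
def rootDL (q r : ℕ) : DL q r := ⟨(troot q, troot r), by simp [hor, troot]⟩

/-- A kernel on `DL(q,r)` is semi-isotropic if it depends only on the quadruple
`(up(x₁,y₁), up(y₁,x₁), up(x₂,y₂), up(y₂,x₂))`. -/
def SemiIsoDL {q r : ℕ} {α : Type*} (κ : DL q r → DL q r → α) : Prop :=
  ∀ x y x' y' : DL q r,
    up x.1.1 y.1.1 = up x'.1.1 y'.1.1 → up y.1.1 x.1.1 = up y'.1.1 x'.1.1 →
    up x.1.2 y.1.2 = up x'.1.2 y'.1.2 → up y.1.2 x.1.2 = up y'.1.2 x'.1.2 →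
    κ x y = κ x' y'

/-- A canonical vertex of `DL(q,r)` with prescribed first coordinate. -/
def dlmk1 {q r : ℕ} (x₁ : V q) : DL q r :=
  ⟨(x₁, (zeroConf r, -hor x₁)), by simp [hor]⟩

/-- A canonical vertex of `DL(q,r)` with prescribed second coordinate. -/
def dlmk2 {q r : ℕ} (x₂ : V r) : DL q r :=
  ⟨((zeroConf q, -hor x₂), x₂), by simp [hor]⟩

open Classical in
/-- Projection `P₁` of a transition matrix on `DL(q,r)` to the tree `T_q`:
`p₁(x₁,y₁) = ∑_{y₂ : y₁y₂ ∈ DL(q,r)} p(x₁x₂, y₁y₂)` (independent of the choice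
of `x₂` with `x₁x₂ ∈ DL(q,r)` when `p` is semi-isotropic). -/
noncomputable def proj1 {q r : ℕ} (p : DL q r → DL q r → ℝ) (x₁ y₁ : V q) : ℝ :=
  ∑' y : DL q r, if y.1.1 = y₁ then p (dlmk1 x₁) y else 0

open Classical in
/-- Projection `P₂` of a transition matrix on `DL(q,r)` to the tree `T_r`. -/
noncomputable def proj2 {q r : ℕ} (p : DL q r → DL q r → ℝ) (x₂ y₂ : V r) : ℝ :=
  ∑' y : DL q r, if y.1.2 = y₂ then p (dlmk2 x₂) y else 0

/-- Graph distance on `DL(q,r)`: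
`d(x,y) = d(x₁,y₁) + d(x₂,y₂) - |hor(x₁) - hor(y₁)|`. -/
noncomputable def dDL {q r : ℕ} (x y : DL q r) : ℤ :=
  tdist x.1.1 y.1.1 + tdist x.1.2 y.1.2 - |hor x.1.1 - hor y.1.1|

/-! ### Auxiliary machinery for the proof -/

namespace SIAux

variable {q : ℕ}

/-- Digit of a vertex at level `j` (zero above the vertex's level). -/
def fval (x : V q) (j : ℤ) : ZMod q :=
  if j ≤ x.2 then x.1.1 (x.2 - j).toNat else 0

/-- The set whose supremum defines `kbar`. -/
def aset (x y : V q) : Set ℤ :=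
  {ℓ : ℤ | ℓ ≤ min x.2 y.2 ∧
    ∀ m : ℕ, x.1.1 ((x.2 - ℓ).toNat + m) = y.1.1 ((y.2 - ℓ).toNat + m)}

lemma kbar_def (x y : V q) : kbar x y = sSup (aset x y) := rfl

lemma vext {x y : V q} (h2 : x.2 = y.2) (h1 : ∀ n, x.1.1 n = y.1.1 n) : x = y := by
  obtain ⟨⟨f, hf⟩, k⟩ := x
  obtain ⟨⟨g, hg⟩, k'⟩ := y
  have h2' : k = k' := h2
  subst h2'
  have h1' : f = g := funext fun n => h1 n
  subst h1'
  rfl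

lemma fval_apply (x : V q) (n : ℕ) : fval x (x.2 - n) = x.1.1 n := by
  unfold fval
  rw [if_pos (show x.2 - (n : ℤ) ≤ x.2 by omega)]
  have e : (x.2 - (x.2 - (n : ℤ))).toNat = n := by omega
  rw [e]

lemma eq_of_fval {x y : V q} (h2 : x.2 = y.2) (h : ∀ j ≤ x.2, fval x j = fval y j) :
    x = y := by
  apply vext h2
  intro n
  have e1 := fval_apply x n
  have e2 := fval_apply y n
  rw [← e1, ← e2, ← h2]
  exact h _ (by omega)

lemma mem_aset {x y : V q} {ℓ : ℤ} (h1 : ℓ ≤ min x.2 y.2)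
    (h2 : ∀ j ≤ ℓ, fval x j = fval y j) : ℓ ∈ aset x y := by
  refine ⟨h1, fun m => ?_⟩
  have hx : ℓ ≤ x.2 := le_trans h1 (min_le_left _ _)
  have hy : ℓ ≤ y.2 := le_trans h1 (min_le_right _ _)
  have key := h2 (ℓ - m) (by omega)
  unfold fval at key
  rw [if_pos (show ℓ - (m : ℤ) ≤ x.2 by omega),
    if_pos (show ℓ - (m : ℤ) ≤ y.2 by omega)] at key
  have ex : (x.2 - (ℓ - (m : ℤ))).toNat = (x.2 - ℓ).toNat + m := by omega
  have ey : (y.2 - (ℓ - (m : ℤ))).toNat = (y.2 - ℓ).toNat + m := by omega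
  rw [ex, ey] at key
  exact key

lemma aset_agree {x y : V q} {ℓ : ℤ} (h : ℓ ∈ aset x y) :
    ∀ j ≤ ℓ, fval x j = fval y j := by
  obtain ⟨h1, h2⟩ := h
  intro j hj
  have hx : j ≤ x.2 := le_trans hj (le_trans h1 (min_le_left _ _))
  have hy : j ≤ y.2 := le_trans hj (le_trans h1 (min_le_right _ _))
  have key := h2 (ℓ - j).toNat
  unfold fval
  rw [if_pos hx, if_pos hy]
  have hx2 : ℓ ≤ x.2 := le_trans h1 (min_le_left _ _)
  have hy2 : ℓ ≤ y.2 := le_trans h1 (min_le_right _ _)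
  have ex : (x.2 - j).toNat = (x.2 - ℓ).toNat + (ℓ - j).toNat := by omega
  have ey : (y.2 - j).toNat = (y.2 - ℓ).toNat + (ℓ - j).toNat := by omega
  rw [ex, ey]
  exact key

lemma aset_bddAbove (x y : V q) : BddAbove (aset x y) :=
  ⟨min x.2 y.2, fun _ hℓ => hℓ.1⟩

lemma fval_zero {x : V q} {N : ℕ} (hN : N ∈ upperBounds (Function.support x.1.1))
    {j : ℤ} (hj : j + N < x.2) : fval x j = 0 := by
  unfold fval
  rw [if_pos (show j ≤ x.2 by omega)]
  by_contra hne
  have := hN (Function.mem_support.mpr hne)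
  omega

lemma aset_nonempty (x y : V q) : (aset x y).Nonempty := by
  obtain ⟨N₁, hN₁⟩ := (x.1.2).bddAbove
  obtain ⟨N₂, hN₂⟩ := (y.1.2).bddAbove
  have h1 := min_le_left x.2 y.2
  have h2 := min_le_right x.2 y.2
  refine ⟨min x.2 y.2 - ((N₁ : ℤ) + N₂ + 1), mem_aset (by omega) ?_⟩
  intro j hj
  rw [fval_zero hN₁ (show j + (N₁ : ℤ) < x.2 by omega),
    fval_zero hN₂ (show j + (N₂ : ℤ) < y.2 by omega)]

lemma kbar_mem (x y : V q) : kbar x y ∈ aset x y := by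
  rw [kbar_def]
  exact Int.csSup_mem (aset_nonempty x y) (aset_bddAbove x y)

lemma le_kbar {x y : V q} {ℓ : ℤ} (h : ℓ ∈ aset x y) : ℓ ≤ kbar x y := by
  rw [kbar_def]
  exact le_csSup (aset_bddAbove x y) h

lemma kbar_le_min (x y : V q) : kbar x y ≤ min x.2 y.2 := (kbar_mem x y).1

lemma fval_eq_of_le_kbar {x y : V q} {j : ℤ} (h : j ≤ kbar x y) :
    fval x j = fval y j :=
  aset_agree (kbar_mem x y) j h

lemma kbar_succ_ne {x y : V q} (h : kbar x y + 1 ≤ min x.2 y.2) :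
    fval x (kbar x y + 1) ≠ fval y (kbar x y + 1) := by
  intro he
  have hk : kbar x y + 1 ≤ kbar x y := by
    apply le_kbar
    apply mem_aset h
    intro j hj
    by_cases hj2 : j ≤ kbar x y
    · exact fval_eq_of_le_kbar hj2
    · have hj3 : j = kbar x y + 1 := by omega
      rw [hj3]; exact he
  omega

lemma aset_comm (x y : V q) : aset x y = aset y x := by
  ext ℓ
  constructor <;> rintro ⟨h1, h2⟩ <;>
    exact ⟨by rw [min_comm]; exact h1, fun m => (h2 m).symm⟩

lemma kbar_comm (x y : V q) : kbar x y = kbar y x := by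
  rw [kbar_def, kbar_def, aset_comm]

/-! #### Level-respecting automorphisms -/

/-- A bijection of the tree that shifts horocycle indices by `c` and shifts all
confluence levels by `c` (hence preserves all `up`-pairs). -/
def UpIso (φ : V q ≃ V q) (c : ℤ) : Prop :=
  (∀ z : V q, (φ z).2 = z.2 + c) ∧ ∀ z w : V q, kbar (φ z) (φ w) = kbar z w + c

lemma upIso_up {φ : V q ≃ V q} {c : ℤ} (h : UpIso φ c) (z w : V q) :
    up (φ z) (φ w) = up z w := by
  simp only [up]
  rw [h.1 z, h.2 z w]
  ring

lemma upIso_refl : UpIso (Equiv.refl (V q)) 0 :=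
  ⟨fun z => by simp, fun z w => by simp⟩

lemma upIso_trans {φ ψ : V q ≃ V q} {c d : ℤ} (h : UpIso φ c) (h' : UpIso ψ d) :
    UpIso (φ.trans ψ) (c + d) := by
  refine ⟨fun z => ?_, fun z w => ?_⟩
  · show (ψ (φ z)).2 = z.2 + (c + d)
    rw [h'.1, h.1]; ring
  · show kbar (ψ (φ z)) (ψ (φ w)) = kbar z w + (c + d)
    rw [h'.2, h.2]; ring

lemma upIso_congr {φ : V q ≃ V q} {c d : ℤ} (h : UpIso φ c) (e : c = d) :
    UpIso φ d := e ▸ h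

lemma upIso_symm {φ : V q ≃ V q} {c : ℤ} (h : UpIso φ c) : UpIso φ.symm (-c) := by
  refine ⟨fun z => ?_, fun z w => ?_⟩
  · have := h.1 (φ.symm z)
    rw [Equiv.apply_symm_apply] at this
    omega
  · have := h.2 (φ.symm z) (φ.symm w)
    rw [Equiv.apply_symm_apply, Equiv.apply_symm_apply] at this
    omega

lemma upIso_of_aset (φ : V q ≃ V q) (c : ℤ) (hhor : ∀ z : V q, (φ z).2 = z.2 + c)
    (h1 : ∀ z w : V q, ∀ ℓ, ℓ ∈ aset z w → ℓ + c ∈ aset (φ z) (φ w))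
    (h2 : ∀ z w : V q, ∀ ℓ, ℓ ∈ aset (φ z) (φ w) → ℓ - c ∈ aset z w) :
    UpIso φ c := by
  refine ⟨hhor, fun z w => ?_⟩
  have a1 := le_kbar (h1 z w _ (kbar_mem z w))
  have a2 := le_kbar (h2 z w _ (kbar_mem (φ z) (φ w)))
  omega

/-! #### Translations -/

lemma shift_support_finite (g : ℤ → ZMod q) (hg : (Function.support g).Finite)
    (t : ℤ) : {n : ℕ | g (t - (n : ℤ)) ≠ 0}.Finite := by
  apply Set.Finite.subset (hg.image (fun j => (t - j).toNat))
  rintro n hn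
  exact ⟨t - (n : ℤ), Function.mem_support.mpr hn, by
    show (t - (t - (n : ℤ))).toNat = n
    omega⟩

/-- Translation map on the tree. -/
noncomputable def trV (g : ℤ → ZMod q) (hg : (Function.support g).Finite) (c : ℤ)
    (x : V q) : V q :=
  (⟨fun n => x.1.1 n + g (x.2 + c - n), by
      apply Set.Finite.subset ((x.1.2).union (shift_support_finite g hg (x.2 + c)))
      intro n hn
      simp only [Function.mem_support] at hn
      rw [Set.mem_union]
      by_cases h1 : x.1.1 n = 0
      · right
        show g (x.2 + c - (n : ℤ)) ≠ 0
        intro h2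
        exact hn (by rw [h1, h2, add_zero])
      · left
        exact Function.mem_support.mpr h1⟩, x.2 + c)

lemma trV_snd (g : ℤ → ZMod q) (hg : (Function.support g).Finite) (c : ℤ)
    (x : V q) : (trV g hg c x).2 = x.2 + c := rfl

lemma trV_val (g : ℤ → ZMod q) (hg : (Function.support g).Finite) (c : ℤ)
    (x : V q) (n : ℕ) : (trV g hg c x).1.1 n = x.1.1 n + g (x.2 + c - n) := rfl

lemma fval_trV (g : ℤ → ZMod q) (hg : (Function.support g).Finite) (c : ℤ)
    (x : V q) (j : ℤ) (hj : j ≤ x.2 + c) :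
    fval (trV g hg c x) j = fval x (j - c) + g j := by
  unfold fval
  rw [trV_snd, if_pos hj, if_pos (show j - c ≤ x.2 by omega), trV_val]
  have e3 : x.2 + c - ((x.2 + c - j).toNat : ℤ) = j := by omega
  have e2 : (x.2 + c - j).toNat = (x.2 - (j - c)).toNat := by omega
  rw [e3, e2]

/-- Translation as an equivalence. -/
noncomputable def trE (g : ℤ → ZMod q) (hg : (Function.support g).Finite) (c : ℤ) :
    V q ≃ V q where
  toFun := trV g hg c
  invFun := trV (fun j => - g (j + c)) (by
      apply Set.Finite.subset (hg.image (fun j => j - c))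
      intro j hj
      have hj' : g (j + c) ≠ 0 := by
        have := Function.mem_support.mp hj
        simpa using this
      exact ⟨j + c, Function.mem_support.mpr hj', by ring⟩) (-c)
  left_inv := by
    intro x
    apply vext
    · show x.2 + c + -c = x.2
      ring
    · intro n
      show (x.1.1 n + g (x.2 + c - n)) + - g ((x.2 + c + -c - n) + c) = x.1.1 n
      have e : (x.2 + c + -c - (n : ℤ)) + c = x.2 + c - n := by ring
      rw [e]; ring
  right_inv := by
    intro x
    apply vext
    · show x.2 + -c + c = x.2
      ring
    · intro n
      show (x.1.1 n + - g ((x.2 + -c - n) + c)) + g (x.2 + -c + c - n) = x.1.1 n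
      have e : (x.2 + -c - (n : ℤ)) + c = x.2 + -c + c - n := by ring
      rw [e]; ring

lemma aset_trV_mem (g : ℤ → ZMod q) (hg : (Function.support g).Finite) (c : ℤ)
    (z w : V q) (ℓ : ℤ) :
    ℓ ∈ aset z w ↔ ℓ + c ∈ aset (trV g hg c z) (trV g hg c w) := by
  constructor
  · intro h
    have hb := h.1
    have hz : ℓ ≤ z.2 := le_trans hb (min_le_left _ _)
    have hw : ℓ ≤ w.2 := le_trans hb (min_le_right _ _)
    apply mem_aset
    · rw [trV_snd g hg c z, trV_snd g hg c w]
      exact le_min (by omega) (by omega)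
    · intro j hj
      rw [fval_trV g hg c z j (by omega), fval_trV g hg c w j (by omega),
        aset_agree h (j - c) (by omega)]
  · intro h
    have hb : ℓ + c ≤ (trV g hg c z).2 := le_trans h.1 (min_le_left _ _)
    have hb' : ℓ + c ≤ (trV g hg c w).2 := le_trans h.1 (min_le_right _ _)
    rw [trV_snd] at hb
    rw [trV_snd] at hb'
    apply mem_aset (le_min (by omega) (by omega))
    intro j hj
    have key := aset_agree h (j + c) (by omega)
    rw [fval_trV g hg c z (j + c) (by omega),
      fval_trV g hg c w (j + c) (by omega)] at key
    have e : j + c - c = j := by ring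
    rw [e] at key
    exact add_right_cancel key

lemma upIso_tr (g : ℤ → ZMod q) (hg : (Function.support g).Finite) (c : ℤ) :
    UpIso (trE g hg c) c := by
  apply upIso_of_aset
  · intro z
    rfl
  · intro z w ℓ hℓ
    exact (aset_trV_mem g hg c z w ℓ).1 hℓ
  · intro z w ℓ hℓ
    apply (aset_trV_mem g hg c z w (ℓ - c)).2
    rw [show ℓ - c + c = ℓ from by ring]
    exact hℓ

/-! #### Conditional single-digit permutations -/

open Classical in
/-- Permute the digit at level `j₀` by `π` on all vertices whose digits strictly
below `j₀` agree with `P`. -/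
noncomputable def cpV (j₀ : ℤ) (P : ℤ → ZMod q) (π : Equiv.Perm (ZMod q))
    (x : V q) : V q :=
  (⟨fun n => if (x.2 - (n : ℤ) = j₀ ∧ ∀ j < j₀, fval x j = P j)
      then π (x.1.1 n) else x.1.1 n, by
      apply Set.Finite.subset ((x.1.2).union (Set.finite_singleton (x.2 - j₀).toNat))
      intro n hn
      simp only [Function.mem_support] at hn
      rw [Set.mem_union]
      by_cases hc : (x.2 - (n : ℤ) = j₀ ∧ ∀ j < j₀, fval x j = P j)
      · right
        have h1 := hc.1
        simp only [Set.mem_singleton_iff]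
        omega
      · left
        rw [if_neg hc] at hn
        exact Function.mem_support.mpr hn⟩, x.2)

lemma cpV_snd (j₀ : ℤ) (P : ℤ → ZMod q) (π : Equiv.Perm (ZMod q)) (x : V q) :
    (cpV j₀ P π x).2 = x.2 := rfl

open Classical in
lemma cpV_val (j₀ : ℤ) (P : ℤ → ZMod q) (π : Equiv.Perm (ZMod q)) (x : V q)
    (n : ℕ) : (cpV j₀ P π x).1.1 n =
      if (x.2 - (n : ℤ) = j₀ ∧ ∀ j < j₀, fval x j = P j)
      then π (x.1.1 n) else x.1.1 n := rfl

lemma fval_cpV_ne {j₀ : ℤ} {P : ℤ → ZMod q} {π : Equiv.Perm (ZMod q)} {x : V q}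
    {j : ℤ} (h : j ≠ j₀) : fval (cpV j₀ P π x) j = fval x j := by
  unfold fval
  rw [cpV_snd]
  by_cases hj : j ≤ x.2
  · rw [if_pos hj, if_pos hj, cpV_val, if_neg]
    rintro ⟨h1, -⟩
    omega
  · rw [if_neg hj, if_neg hj]

lemma fval_cpV_eq {j₀ : ℤ} {P : ℤ → ZMod q} {π : Equiv.Perm (ZMod q)} {x : V q}
    (h1 : j₀ ≤ x.2) (h2 : ∀ j < j₀, fval x j = P j) :
    fval (cpV j₀ P π x) j₀ = π (fval x j₀) := by
  have hcc : (x.2 - ((x.2 - j₀).toNat : ℤ) = j₀ ∧ ∀ j < j₀, fval x j = P j) :=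
    ⟨by omega, h2⟩
  unfold fval
  rw [cpV_snd, if_pos h1, if_pos h1, cpV_val, if_pos hcc]

lemma fval_cpV_nc {j₀ : ℤ} {P : ℤ → ZMod q} {π : Equiv.Perm (ZMod q)} {x : V q}
    (h2 : ¬ ∀ j < j₀, fval x j = P j) (j : ℤ) :
    fval (cpV j₀ P π x) j = fval x j := by
  unfold fval
  rw [cpV_snd]
  by_cases hj : j ≤ x.2
  · rw [if_pos hj, if_pos hj, cpV_val, if_neg (fun hc => h2 hc.2)]
  · rw [if_neg hj, if_neg hj]

lemma cpV_inv (j₀ : ℤ) (P : ℤ → ZMod q) (π π' : Equiv.Perm (ZMod q))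
    (hπ : ∀ a, π' (π a) = a) (x : V q) :
    cpV j₀ P π' (cpV j₀ P π x) = x := by
  apply vext
  · rfl
  intro n
  have hcond : (∀ j < j₀, fval (cpV j₀ P π x) j = P j) ↔
      (∀ j < j₀, fval x j = P j) := by
    constructor <;> intro h j hj
    · rw [← fval_cpV_ne (ne_of_lt hj)]
      exact h j hj
    · rw [fval_cpV_ne (ne_of_lt hj)]
      exact h j hj
  rw [cpV_val, cpV_val, cpV_snd]
  by_cases hc : (x.2 - (n : ℤ) = j₀ ∧ ∀ j < j₀, fval x j = P j)
  · rw [if_pos ⟨hc.1, hcond.2 hc.2⟩, if_pos hc, hπ]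
  · rw [if_neg (fun hcc => hc ⟨hcc.1, hcond.1 hcc.2⟩), if_neg hc]

/-- Conditional digit permutation as an equivalence. -/
noncomputable def cpE (j₀ : ℤ) (P : ℤ → ZMod q) (π : Equiv.Perm (ZMod q)) :
    V q ≃ V q where
  toFun := cpV j₀ P π
  invFun := cpV j₀ P π⁻¹
  left_inv x := cpV_inv j₀ P π π⁻¹ (fun a => Equiv.symm_apply_apply π a) x
  right_inv x := cpV_inv j₀ P π⁻¹ π (fun a => Equiv.apply_symm_apply π a) x

lemma cpE_apply (j₀ : ℤ) (P : ℤ → ZMod q) (π : Equiv.Perm (ZMod q)) (x : V q) :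
    (cpE j₀ P π) x = cpV j₀ P π x := rfl

lemma cpV_fix_lt {j₀ : ℤ} {P : ℤ → ZMod q} {π : Equiv.Perm (ZMod q)} {x : V q}
    (h : x.2 < j₀) : cpV j₀ P π x = x := by
  apply vext
  · rfl
  intro n
  rw [cpV_val, if_neg]
  rintro ⟨h1, -⟩
  omega

lemma cpV_fix_or {j₀ : ℤ} {P : ℤ → ZMod q} {π : Equiv.Perm (ZMod q)} {x : V q}
    (h : π (fval x j₀) = fval x j₀ ∨ ¬ ∀ j < j₀, fval x j = P j) :
    cpV j₀ P π x = x := by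
  apply vext
  · rfl
  intro n
  rw [cpV_val]
  by_cases hc : (x.2 - (n : ℤ) = j₀ ∧ ∀ j < j₀, fval x j = P j)
  · rw [if_pos hc]
    rcases h with h | h
    · have h1 := hc.1
      have hx : x.1.1 n = fval x j₀ := by
        unfold fval
        rw [if_pos (show j₀ ≤ x.2 by omega)]
        have e : (x.2 - j₀).toNat = n := by omega
        rw [e]
      rw [hx, h, ← hx]
    · exact absurd hc.2 h
  · rw [if_neg hc]

lemma aset_cpV_mem (j₀ : ℤ) (P : ℤ → ZMod q) (π : Equiv.Perm (ZMod q))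
    (z w : V q) (ℓ : ℤ) :
    ℓ ∈ aset z w ↔ ℓ ∈ aset (cpV j₀ P π z) (cpV j₀ P π w) := by
  constructor
  · intro h
    have hb := h.1
    have hz : ℓ ≤ z.2 := le_trans hb (min_le_left _ _)
    have hw : ℓ ≤ w.2 := le_trans hb (min_le_right _ _)
    have hag := aset_agree h
    apply mem_aset
    · rw [cpV_snd j₀ P π z, cpV_snd j₀ P π w]
      exact hb
    · intro j hj
      by_cases hje : j = j₀
      · subst hje
        by_cases hcz : ∀ j' < j, fval z j' = P j'
        · have hcw : ∀ j' < j, fval w j' = P j' := fun j' hj' => by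
            rw [← hag j' (by omega)]
            exact hcz j' hj'
          rw [fval_cpV_eq (by omega) hcz, fval_cpV_eq (by omega) hcw, hag j hj]
        · have hcw : ¬ ∀ j' < j, fval w j' = P j' := fun hcw => hcz fun j' hj' => by
            rw [hag j' (by omega)]
            exact hcw j' hj'
          rw [fval_cpV_nc hcz j, fval_cpV_nc hcw j]
          exact hag j hj
      · rw [fval_cpV_ne hje, fval_cpV_ne hje]
        exact hag j hj
  · intro h
    have hb : ℓ ≤ min z.2 w.2 := by
      have hb0 := h.1
      rwa [cpV_snd j₀ P π z, cpV_snd j₀ P π w] at hb0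
    have hz : ℓ ≤ z.2 := le_trans hb (min_le_left _ _)
    have hw : ℓ ≤ w.2 := le_trans hb (min_le_right _ _)
    have hag := aset_agree h
    have hoff : ∀ j ≤ ℓ, j ≠ j₀ → fval z j = fval w j := fun j hj hje => by
      have key := hag j hj
      rwa [fval_cpV_ne hje, fval_cpV_ne hje] at key
    apply mem_aset hb
    intro j hj
    by_cases hje : j = j₀
    · subst hje
      have hbel : ∀ j' < j, fval z j' = fval w j' := fun j' hj' =>
        hoff j' (by omega) (by omega)
      by_cases hcz : ∀ j' < j, fval z j' = P j'
      · have hcw : ∀ j' < j, fval w j' = P j' := fun j' hj' =>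
          (hbel j' hj').symm.trans (hcz j' hj')
        have key := hag j hj
        rw [fval_cpV_eq (by omega) hcz, fval_cpV_eq (by omega) hcw] at key
        exact π.injective key
      · have hcw : ¬ ∀ j' < j, fval w j' = P j' := fun hcw => hcz fun j' hj' =>
          (hbel j' hj').trans (hcw j' hj')
        have key := hag j hj
        rwa [fval_cpV_nc hcz j, fval_cpV_nc hcw j] at key
    · exact hoff j hj hje

lemma upIso_cp (j₀ : ℤ) (P : ℤ → ZMod q) (π : Equiv.Perm (ZMod q)) :
    UpIso (cpE j₀ P π) 0 := by
  apply upIso_of_aset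
  · intro z
    rw [cpE_apply, cpV_snd, add_zero]
  · intro z w ℓ hℓ
    rw [add_zero, cpE_apply, cpE_apply]
    exact (aset_cpV_mem j₀ P π z w ℓ).1 hℓ
  · intro z w ℓ hℓ
    rw [cpE_apply, cpE_apply] at hℓ
    rw [sub_zero]
    exact (aset_cpV_mem j₀ P π z w ℓ).2 hℓ

/-! #### Transitivity on pairs -/

lemma stab_base {b b' : V q} (hlev : b.2 = b'.2) (h : b.2 ≤ kbar b b') : b = b' := by
  apply eq_of_fval hlev
  intro j hj
  exact fval_eq_of_le_kbar (le_trans hj h)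

lemma stab_exists : ∀ (n : ℕ) (a b b' : V q), (b.2 - kbar b b').toNat ≤ n →
    b.2 = b'.2 → kbar a b = kbar a b' →
    ∃ φ : V q ≃ V q, UpIso φ 0 ∧ φ a = a ∧ φ b = b' := by
  intro n
  induction n with
  | zero =>
    intro a b b' hm hlev hk
    have hbb : b = b' := stab_base hlev (by omega)
    exact ⟨Equiv.refl _, upIso_refl, rfl, by rw [Equiv.refl_apply, hbb]⟩
  | succ n ih =>
    intro a b b' hm hlev hk
    by_cases hbb : b.2 ≤ kbar b b'
    · have hbb' : b = b' := stab_base hlev hbb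
      exact ⟨Equiv.refl _, upIso_refl, rfl, by rw [Equiv.refl_apply, hbb']⟩
    · push_neg at hbb
      have hsmin := kbar_le_min b b'
      have hminab := kbar_le_min a b
      have hminab' := kbar_le_min a b'
      have hab_b : kbar a b ≤ b.2 := le_trans hminab (min_le_right _ _)
      have hab_a : kbar a b ≤ a.2 := le_trans hminab (min_le_left _ _)
      have hab'_b : kbar a b' ≤ b'.2 := le_trans hminab' (min_le_right _ _)
      have hs_b : kbar b b' ≤ b.2 := le_trans hsmin (min_le_left _ _)
      have hs_b' : kbar b b' ≤ b'.2 := le_trans hsmin (min_le_right _ _)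
      have hts : kbar a b ≤ kbar b b' := by
        apply le_kbar
        apply mem_aset (le_min hab_b (by omega))
        intro j hj
        have e1 : fval a j = fval b j := fval_eq_of_le_kbar hj
        have e2 : fval a j = fval b' j := fval_eq_of_le_kbar (by omega)
        rw [← e1, e2]
      set π := Equiv.swap (fval b (kbar b b' + 1)) (fval b' (kbar b b' + 1)) with hπ
      have hcondb : ∀ j' < kbar b b' + 1, fval b j' = fval b j' := fun _ _ => rfl
      have hfb1top : fval (cpV (kbar b b' + 1) (fval b) π b) (kbar b b' + 1) =
          fval b' (kbar b b' + 1) := by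
        rw [fval_cpV_eq (by omega) hcondb, hπ]
        exact Equiv.swap_apply_left _ _
      have hfb1 : ∀ j, j ≠ kbar b b' + 1 →
          fval (cpV (kbar b b' + 1) (fval b) π b) j = fval b j :=
        fun j hj => fval_cpV_ne hj
      have hb1lev : (cpV (kbar b b' + 1) (fval b) π b).2 = b.2 := cpV_snd _ _ _ _
      have hk1 : kbar b b' + 1 ≤ kbar (cpV (kbar b b' + 1) (fval b) π b) b' := by
        apply le_kbar
        apply mem_aset
        · rw [hb1lev]
          exact le_min (by omega) (by omega)
        · intro j hj
          by_cases hje : j = kbar b b' + 1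
          · rw [hje, hfb1top]
          · rw [hfb1 j hje]
            exact fval_eq_of_le_kbar (by omega)
      have hfixa : cpV (kbar b b' + 1) (fval b) π a = a := by
        by_cases hca : kbar b b' + 1 ≤ a.2
        · by_cases hts' : kbar a b = kbar b b'
          · apply cpV_fix_or
            left
            have hne1 : fval a (kbar b b' + 1) ≠ fval b (kbar b b' + 1) := by
              have key := kbar_succ_ne (x := a) (y := b)
                (le_min (by omega) (by omega))
              rwa [hts'] at key
            have hne2 : fval a (kbar b b' + 1) ≠ fval b' (kbar b b' + 1) := by
              have he : kbar a b' = kbar b b' := by omega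
              have key := kbar_succ_ne (x := a) (y := b')
                (le_min (by omega) (by omega))
              rwa [he] at key
            rw [hπ]
            exact Equiv.swap_apply_of_ne_of_ne hne1 hne2
          · apply cpV_fix_or
            right
            intro hall
            have key := hall (kbar a b + 1) (by omega)
            exact kbar_succ_ne (le_min (by omega) (by omega)) key
        · exact cpV_fix_lt (by omega)
      have hk2 : kbar a (cpV (kbar b b' + 1) (fval b) π b) = kbar a b' := by
        have h0 := (upIso_cp (kbar b b' + 1) (fval b) π).2 a b
        rw [cpE_apply, cpE_apply, hfixa] at h0
        omega
      have hm1 : ((cpV (kbar b b' + 1) (fval b) π b).2 -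
          kbar (cpV (kbar b b' + 1) (fval b) π b) b').toNat ≤ n := by
        rw [hb1lev]
        omega
      obtain ⟨ψ, hψiso, hψa, hψb⟩ := ih a (cpV (kbar b b' + 1) (fval b) π b) b'
        hm1 (by rw [hb1lev]; exact hlev) hk2
      refine ⟨(cpE (kbar b b' + 1) (fval b) π).trans ψ,
        upIso_congr (upIso_trans (upIso_cp _ _ _) hψiso) (by ring), ?_, ?_⟩
      · show ψ ((cpE (kbar b b' + 1) (fval b) π) a) = a
        rw [cpE_apply, hfixa, hψa]
      · show ψ ((cpE (kbar b b' + 1) (fval b) π) b) = b'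
        rw [cpE_apply, hψb]

lemma finite_fval_support (x : V q) (c : ℤ) : {j : ℤ | fval x (j - c) ≠ 0}.Finite := by
  apply Set.Finite.subset ((x.1.2).image (fun n : ℕ => x.2 - (n : ℤ) + c))
  intro j hj
  have hj' : fval x (j - c) ≠ 0 := hj
  have hle : j - c ≤ x.2 := by
    by_contra hgt
    apply hj'
    unfold fval
    rw [if_neg hgt]
  refine ⟨(x.2 - (j - c)).toNat, ?_, by
    show x.2 - ((x.2 - (j - c)).toNat : ℤ) + c = j
    omega⟩
  apply Function.mem_support.mpr
  intro h0
  apply hj'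
  unfold fval
  rw [if_pos hle]
  exact h0

lemma finite_fval_support' (x : V q) : {j : ℤ | fval x j ≠ 0}.Finite := by
  have h := finite_fval_support x 0
  apply Set.Finite.subset h
  intro j hj
  show fval x (j - 0) ≠ 0
  rw [sub_zero]
  exact hj

lemma tr_exists (a a' : V q) :
    ∃ φ : V q ≃ V q, UpIso φ (a'.2 - a.2) ∧ φ a = a' := by
  have hg : (Function.support
      (fun j => fval a' j - fval a (j - (a'.2 - a.2)))).Finite := by
    apply Set.Finite.subset
      ((finite_fval_support' a').union (finite_fval_support a (a'.2 - a.2)))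
    intro j hj
    simp only [Function.mem_support] at hj
    rw [Set.mem_union]
    by_cases h1 : fval a' j = 0
    · right
      show fval a (j - (a'.2 - a.2)) ≠ 0
      intro h2
      exact hj (by rw [h1, h2, sub_zero])
    · left
      exact h1
  refine ⟨trE _ hg (a'.2 - a.2), upIso_tr _ hg _, ?_⟩
  apply vext
  · show a.2 + (a'.2 - a.2) = a'.2
    ring
  · intro n
    show a.1.1 n + (fval a' (a.2 + (a'.2 - a.2) - n) -
      fval a ((a.2 + (a'.2 - a.2) - n) - (a'.2 - a.2))) = a'.1.1 n
    have e1 : a.2 + (a'.2 - a.2) - (n : ℤ) = a'.2 - n := by ring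
    have e2 : a'.2 - (n : ℤ) - (a'.2 - a.2) = a.2 - n := by ring
    rw [e1, e2, fval_apply a n, fval_apply a' n]
    ring

lemma pair_exists (a b a' b' : V q) (h1 : up a b = up a' b') (h2 : up b a = up b' a') :
    ∃ φ : V q ≃ V q, UpIso φ (a'.2 - a.2) ∧ φ a = a' ∧ φ b = b' := by
  obtain ⟨Ψ, hΨ, hΨa⟩ := tr_exists a a'
  have hc1 := kbar_comm b a
  have hc2 := kbar_comm b' a'
  simp only [up] at h1 h2
  have hkab : kbar a' b' = kbar a b + (a'.2 - a.2) := by omega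
  have hb2 : b'.2 = b.2 + (a'.2 - a.2) := by omega
  have hΨb2 : (Ψ b).2 = b'.2 := by
    rw [hΨ.1 b]
    omega
  have hkk : kbar a' (Ψ b) = kbar a' b' := by
    have key := hΨ.2 a b
    rw [hΨa] at key
    omega
  obtain ⟨ψ, hψiso, hψa, hψb⟩ := stab_exists ((Ψ b).2 - kbar (Ψ b) b').toNat
    a' (Ψ b) b' le_rfl hΨb2 hkk
  refine ⟨Ψ.trans ψ, upIso_congr (upIso_trans hΨ hψiso) (by ring), ?_, ?_⟩
  · show ψ (Ψ a) = a'
    rw [hΨa, hψa]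
  · show ψ (Ψ b) = b'
    exact hψb

/-! #### Assembly on `DL(q,r)` -/

/-- Product of two `UpIso`s with opposite shifts, as a bijection of `DL(q,r)`. -/
noncomputable def dlE {q r : ℕ} (φ₁ : V q ≃ V q) (φ₂ : V r ≃ V r) {c : ℤ}
    (h₁ : UpIso φ₁ c) (h₂ : UpIso φ₂ (-c)) : DL q r ≃ DL q r where
  toFun z := ⟨(φ₁ z.1.1, φ₂ z.1.2), by
    have hz : z.1.1.2 + z.1.2.2 = 0 := z.2
    have e1 := h₁.1 z.1.1
    have e2 := h₂.1 z.1.2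
    show (φ₁ z.1.1).2 + (φ₂ z.1.2).2 = 0
    omega⟩
  invFun z := ⟨(φ₁.symm z.1.1, φ₂.symm z.1.2), by
    have hz : z.1.1.2 + z.1.2.2 = 0 := z.2
    have e1 := (upIso_symm h₁).1 z.1.1
    have e2 := (upIso_symm h₂).1 z.1.2
    show (φ₁.symm z.1.1).2 + (φ₂.symm z.1.2).2 = 0
    omega⟩
  left_inv z := by
    apply Subtype.ext
    show (φ₁.symm (φ₁ z.1.1), φ₂.symm (φ₂ z.1.2)) = z.1
    rw [Equiv.symm_apply_apply, Equiv.symm_apply_apply]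
  right_inv z := by
    apply Subtype.ext
    show (φ₁ (φ₁.symm z.1.1), φ₂ (φ₂.symm z.1.2)) = z.1
    rw [Equiv.apply_symm_apply, Equiv.apply_symm_apply]

lemma dl_pair {q r : ℕ} (x y x' y' : DL q r)
    (e1 : up x.1.1 y.1.1 = up x'.1.1 y'.1.1) (e2 : up y.1.1 x.1.1 = up y'.1.1 x'.1.1)
    (e3 : up x.1.2 y.1.2 = up x'.1.2 y'.1.2) (e4 : up y.1.2 x.1.2 = up y'.1.2 x'.1.2) :
    ∃ Φ : DL q r ≃ DL q r, Φ x = x' ∧ Φ y = y' ∧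
      ∀ z w : DL q r, up (Φ z).1.1 (Φ w).1.1 = up z.1.1 w.1.1 ∧
        up (Φ z).1.2 (Φ w).1.2 = up z.1.2 w.1.2 := by
  obtain ⟨φ₁, h₁, ha₁, hb₁⟩ := pair_exists x.1.1 y.1.1 x'.1.1 y'.1.1 e1 e2
  obtain ⟨φ₂, h₂, ha₂, hb₂⟩ := pair_exists x.1.2 y.1.2 x'.1.2 y'.1.2 e3 e4
  have hcc : x'.1.2.2 - x.1.2.2 = -(x'.1.1.2 - x.1.1.2) := by
    have hh1 : x.1.1.2 + x.1.2.2 = 0 := x.2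
    have hh2 : x'.1.1.2 + x'.1.2.2 = 0 := x'.2
    omega
  have h₂' : UpIso φ₂ (-(x'.1.1.2 - x.1.1.2)) := upIso_congr h₂ hcc
  refine ⟨dlE φ₁ φ₂ h₁ h₂', ?_, ?_, fun z w => ⟨upIso_up h₁ _ _, upIso_up h₂' _ _⟩⟩
  · apply Subtype.ext
    show (φ₁ x.1.1, φ₂ x.1.2) = x'.1
    rw [ha₁, ha₂]
  · apply Subtype.ext
    show (φ₁ y.1.1, φ₂ y.1.2) = y'.1
    rw [hb₁, hb₂]

end SIAux

open SIAux

/-- For a semi-isotropic transition matrix on `DL(q,r)`, all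
`n`-step transition probabilities and the Green kernel depend only on the
quadruple `(up(x₁,y₁), up(y₁,x₁), up(x₂,y₂), up(y₂,x₂))`; in particular, if
`x = x₁x₂`, `v = v₁x₂` with `hor(x₁) = hor(v₁)` and `up(x₁,y₁) > up(x₁,v₁)`,
then `G(x,y) = G(v,y)`. -/
theorem green_semiIso (q r : ℕ) (hq : 2 ≤ q) (hr : 2 ≤ r)
    (p : DL q r → DL q r → ℝ) (hp : IsTransMat p) (hsi : SemiIsoDL p) :
    (∀ n : ℕ, SemiIsoDL (pstep p n)) ∧ SemiIsoDL (Green p) ∧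
      ∀ x v y : DL q r, x.1.2 = v.1.2 → hor x.1.1 = hor v.1.1 →
        up x.1.1 v.1.1 < up x.1.1 y.1.1 → Green p x y = Green p v y := by
  have key : ∀ n : ℕ, SemiIsoDL (pstep p n) := by
    intro n
    induction n with
    | zero =>
      intro x y x' y' e1 e2 e3 e4
      obtain ⟨Φ, hx, hy, -⟩ := dl_pair x y x' y' e1 e2 e3 e4
      simp only [pstep]
      by_cases h : x = y
      · rw [if_pos h, if_pos (show x' = y' by rw [← hx, ← hy, h])]
      · rw [if_neg h, if_neg (fun he => h (Φ.injective (by rw [hx, hy]; exact he)))]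
    | succ n ih =>
      intro x y x' y' e1 e2 e3 e4
      obtain ⟨Φ, hx, hy, hquad⟩ := dl_pair x y x' y' e1 e2 e3 e4
      simp only [pstep]
      have step : ∀ z, pstep p n x z * p z y = pstep p n x' (Φ z) * p (Φ z) y' := by
        intro z
        have f1 : up x.1.1 z.1.1 = up x'.1.1 (Φ z).1.1 := by
          rw [← hx]; exact ((hquad x z).1).symm
        have f2 : up z.1.1 x.1.1 = up (Φ z).1.1 x'.1.1 := by
          rw [← hx]; exact ((hquad z x).1).symm
        have f3 : up x.1.2 z.1.2 = up x'.1.2 (Φ z).1.2 := by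
          rw [← hx]; exact ((hquad x z).2).symm
        have f4 : up z.1.2 x.1.2 = up (Φ z).1.2 x'.1.2 := by
          rw [← hx]; exact ((hquad z x).2).symm
        have g1 : up z.1.1 y.1.1 = up (Φ z).1.1 y'.1.1 := by
          rw [← hy]; exact ((hquad z y).1).symm
        have g2 : up y.1.1 z.1.1 = up y'.1.1 (Φ z).1.1 := by
          rw [← hy]; exact ((hquad y z).1).symm
        have g3 : up z.1.2 y.1.2 = up (Φ z).1.2 y'.1.2 := by
          rw [← hy]; exact ((hquad z y).2).symm
        have g4 : up y.1.2 z.1.2 = up y'.1.2 (Φ z).1.2 := by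
          rw [← hy]; exact ((hquad y z).2).symm
        rw [ih x z x' (Φ z) f1 f2 f3 f4, hsi z y (Φ z) y' g1 g2 g3 g4]
      exact (tsum_congr step).trans
        (Equiv.tsum_eq Φ (fun w => pstep p n x' w * p w y'))
  have hG : SemiIsoDL (Green p) := by
    intro x y x' y' e1 e2 e3 e4
    unfold Green
    exact tsum_congr fun n => by rw [key n x y x' y' e1 e2 e3 e4]
  refine ⟨key, hG, fun x v y hxv hhor hup => ?_⟩
  have hh1 : x.1.1.2 = v.1.1.2 := hhor
  have hkxy_min := kbar_le_min x.1.1 y.1.1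
  have hkxv_min := kbar_le_min x.1.1 v.1.1
  have hkvy_min := kbar_le_min v.1.1 y.1.1
  have hx_x : kbar x.1.1 y.1.1 ≤ x.1.1.2 := le_trans hkxy_min (min_le_left _ _)
  have hx_y : kbar x.1.1 y.1.1 ≤ y.1.1.2 := le_trans hkxy_min (min_le_right _ _)
  have hxv_x : kbar x.1.1 v.1.1 ≤ x.1.1.2 := le_trans hkxv_min (min_le_left _ _)
  have hxv_v : kbar x.1.1 v.1.1 ≤ v.1.1.2 := le_trans hkxv_min (min_le_right _ _)
  have hvy_v : kbar v.1.1 y.1.1 ≤ v.1.1.2 := le_trans hkvy_min (min_le_left _ _)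
  have hvy_y : kbar v.1.1 y.1.1 ≤ y.1.1.2 := le_trans hkvy_min (min_le_right _ _)
  simp only [up] at hup
  have hlt : kbar x.1.1 y.1.1 < kbar x.1.1 v.1.1 := by omega
  have hkey : kbar v.1.1 y.1.1 = kbar x.1.1 y.1.1 := by
    apply le_antisymm
    · by_contra hgt
      push_neg at hgt
      have hmem : kbar x.1.1 y.1.1 + 1 ≤ kbar x.1.1 y.1.1 := by
        apply le_kbar
        apply mem_aset (le_min (by omega) (by omega))
        intro j hj
        have ea : fval x.1.1 j = fval v.1.1 j := fval_eq_of_le_kbar (by omega)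
        have eb : fval v.1.1 j = fval y.1.1 j := fval_eq_of_le_kbar (by omega)
        rw [ea, eb]
      omega
    · apply le_kbar
      apply mem_aset (le_min (by omega) (by omega))
      intro j hj
      have ea : fval x.1.1 j = fval v.1.1 j := fval_eq_of_le_kbar (by omega)
      have eb : fval x.1.1 j = fval y.1.1 j := fval_eq_of_le_kbar (by omega)
      rw [← ea, eb]
  have e1 : up x.1.1 y.1.1 = up v.1.1 y.1.1 := by
    simp only [up]; omega
  have e2 : up y.1.1 x.1.1 = up y.1.1 v.1.1 := by
    have c1 := kbar_comm y.1.1 x.1.1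
    have c2 := kbar_comm y.1.1 v.1.1
    simp only [up]; omega
  have e3 : up x.1.2 y.1.2 = up v.1.2 y.1.2 := by rw [hxv]
  have e4 : up y.1.2 x.1.2 = up y.1.2 v.1.2 := by rw [hxv]
  exact hG x y v y e1 e2 e3 e4
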